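/- Let P ≥ 1, let a, b be real numbers with b > 0 and b + Pa > 0, and set D = a 1_P 1_Pᵀ + b I_P (which is then symmetric positive definite). Let c > 0 and Δ = c D. Then the balanced design w* with w*_i = 1/P for all i = 1, …, P minimizes the A-criterion Φ_A(w) = tr( (M(w) + Δ⁻¹)⁻¹ ) over all designs w (w_i ≥ 0, Σ_i w_i = 1), where M(w) = diag(w_1, …, w_P). -/

import Mathlib

open Matrix

noncomputable def JJ (P : ℕ) : Matrix (Fin P) (Fin P) ℝ := Matrix.of fun _ _ => (1:ℝ)

lemma JJ_mul_JJ {P : ℕ} : JJ P * JJ P = (P:ℝ) • JJ P := by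
  ext i j
  simp [JJ, Matrix.mul_apply]

lemma cs_mul {P : ℕ} (x y x' y' : ℝ) :
    (x • JJ P + y • 1) * (x' • JJ P + y' • 1)
      = (x*x'*P + x*y' + y*x') • JJ P + (y*y') • 1 := by
  simp only [add_mul, mul_add, smul_mul_assoc, mul_smul_comm, one_mul, mul_one, JJ_mul_JJ]
  module

lemma cs_transpose {P : ℕ} (x y : ℝ) : (x • JJ P + y • 1)ᴴ = x • JJ P + y • 1 := by
  ext i j
  simp [JJ, Matrix.one_apply, conjTranspose_apply]
  split <;> split <;> simp_all

lemma cs_quadform {P : ℕ} (x y : ℝ) (v : Fin P → ℝ) :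
    star v ⬝ᵥ ((x • JJ P + y • 1) *ᵥ v) = x * (∑ i, v i)^2 + y * ∑ i, v i ^ 2 := by
  simp [JJ, add_mulVec, smul_mulVec, dotProduct_add, dotProduct_smul, one_mulVec,
    mulVec, dotProduct, Finset.mul_sum, Finset.sum_mul, sq, mul_add, Matrix.one_apply,
    mul_ite, ite_mul, add_mul, Finset.sum_add_distrib, mul_comm, mul_left_comm]

lemma cs_posDef {P : ℕ} (x y : ℝ) (hy : 0 < y) (hxy : 0 < y + P * x) :
    (x • JJ P + y • 1).PosDef := by
  refine posDef_iff_dotProduct_mulVec.mpr ⟨cs_transpose x y, fun v hv => ?_⟩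
  rw [cs_quadform]
  have hsq : 0 < ∑ i, v i ^ 2 := by
    obtain ⟨i, hi⟩ := Function.ne_iff.mp hv
    exact Finset.sum_pos' (fun j _ => sq_nonneg _)
      ⟨i, Finset.mem_univ i, lt_of_le_of_ne (sq_nonneg _) (Ne.symm (pow_ne_zero 2 hi))⟩
  have hcs : (∑ i, v i)^2 ≤ P * ∑ i, v i ^ 2 := by
    simpa using sq_sum_le_card_mul_sum_sq (s := Finset.univ) (f := v)
  rcases le_or_gt 0 x with hx | hx
  · have : 0 ≤ x * (∑ i, v i)^2 := by positivity
    nlinarith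
  · have : x * (∑ i, v i)^2 ≥ x * (P * ∑ i, v i ^ 2) :=
      (mul_le_mul_of_nonpos_left hcs hx.le)
    nlinarith

lemma psd_trace_nonneg {P : ℕ} {M : Matrix (Fin P) (Fin P) ℝ} (h : M.PosSemidef) :
    0 ≤ M.trace := by
  refine Finset.sum_nonneg fun i _ => ?_
  have := h.dotProduct_mulVec_nonneg (Pi.single i 1)
  simpa [dotProduct, Pi.single_apply, mulVec] using this

/-- in the compound symmetry model `D = a 1ₚ1ₚᵀ + b Iₚ` (with `b > 0`,
    `b + Pa > 0`) and `Δ = c D` with `c > 0`, the balanced design `wᵢ = 1/P` minimizes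
    the A-criterion `Φ_A(v) = tr((M(v) + Δ⁻¹)⁻¹)` over all designs. -/
theorem stmt_5 (P : ℕ) (hP : 1 ≤ P) (a b c : ℝ)
    (hb : 0 < b) (hba : 0 < b + (P : ℝ) * a) (hc : 0 < c)
    (D Δ : Matrix (Fin P) (Fin P) ℝ)
    (hD : D = a • (Matrix.of fun _ _ => (1 : ℝ)) + b • (1 : Matrix (Fin P) (Fin P) ℝ))
    (hΔ : Δ = c • D) :
    ∀ v : Fin P → ℝ, (∀ i, 0 ≤ v i) → ∑ i, v i = 1 →
      ((Matrix.diagonal (fun _ : Fin P => (P : ℝ)⁻¹) + Δ⁻¹)⁻¹).trace ≤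
        ((Matrix.diagonal v + Δ⁻¹)⁻¹).trace := by
  intro v hv0 hv1
  have hPR : (0:ℝ) < P := by exact_mod_cast hP
  have hb' : b ≠ 0 := hb.ne'
  have hc' : c ≠ 0 := hc.ne'
  have hba' : b + (P:ℝ) * a ≠ 0 := hba.ne'
  set α : ℝ := -a / (c*b*(b+(P:ℝ)*a)) with hα
  set β : ℝ := (c*b)⁻¹ with hβdef
  have hβ : 0 < β := by positivity
  have hβα : 0 < β + (P:ℝ) * α := by
    have : β + (P:ℝ) * α = (c*(b+(P:ℝ)*a))⁻¹ := by
      rw [hα, hβdef]; field_simp; ring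
    rw [this]; positivity
  -- Δ in compound symmetry form
  have hΔJ : Δ = (c*a) • JJ P + (c*b) • 1 := by
    rw [hΔ, hD, smul_add, smul_smul, smul_smul]; rfl
  -- explicit inverse of Δ
  have hEinv : Δ⁻¹ = α • JJ P + β • 1 := by
    apply Matrix.inv_eq_right_inv
    rw [hΔJ, cs_mul]
    rw [show c*a*α*(P:ℝ) + c*a*β + c*b*α = 0 by rw [hα, hβdef]; field_simp [show b + a * (P:ℝ) ≠ 0 from fun h => hba' (by linarith)]; ring]
    rw [show c*b*β = 1 by rw [hβdef]; field_simp]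
    simp
  set t : ℝ := β + (P:ℝ)⁻¹ with htdef
  have ht : 0 < t := by positivity
  have ht' : t ≠ 0 := ht.ne'
  set u : ℝ := t + (P:ℝ) * α with hudef
  have hu : 0 < u := by
    have : u = (β + (P:ℝ)*α) + (P:ℝ)⁻¹ := by rw [hudef, htdef]; ring
    rw [this]; positivity
  have hu' : u ≠ 0 := hu.ne'
  set α' : ℝ := -α / (t*u) with hα'
  set β' : ℝ := t⁻¹ with hβ'
  -- the balanced matrix and its inverse Z
  have hdiagc : (Matrix.diagonal (fun _ : Fin P => (P:ℝ)⁻¹))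
      = ((P:ℝ)⁻¹ • (1 : Matrix (Fin P) (Fin P) ℝ)) := by
    ext i j; simp [Matrix.diagonal_apply, Matrix.one_apply, mul_ite]
  have hAst : Matrix.diagonal (fun _ : Fin P => (P:ℝ)⁻¹) + Δ⁻¹ = α • JJ P + t • 1 := by
    rw [hdiagc, hEinv, htdef]; module
  set Z : Matrix (Fin P) (Fin P) ℝ := α' • JJ P + β' • 1 with hZdef
  have hZ1 : (α • JJ P + t • 1) * Z = 1 := by
    rw [hZdef, cs_mul]
    rw [show α*α'*(P:ℝ) + α*β' + t*α' = 0 by rw [hα', hβ', hudef]; field_simp [show t + α * (P:ℝ) ≠ 0 from fun h => hu' (by rw [hudef]; linarith)]; ring]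
    rw [show t*β' = 1 by rw [hβ']; field_simp]
    simp
  have hZ2 : Z * (α • JJ P + t • 1) = 1 := by
    rw [hZdef, cs_mul]
    rw [show α'*α*(P:ℝ) + α'*t + β'*α = 0 by rw [hα', hβ', hudef]; field_simp [show t + α * (P:ℝ) ≠ 0 from fun h => hu' (by rw [hudef]; linarith)]; ring]
    rw [show β'*t = 1 by rw [hβ']; field_simp]
    simp
  have hZinv : (Matrix.diagonal (fun _ : Fin P => (P:ℝ)⁻¹) + Δ⁻¹)⁻¹ = Z := by
    rw [hAst]; exact Matrix.inv_eq_right_inv hZ1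
  -- positive definiteness of A_v
  have hEpd : (Δ⁻¹).PosDef := by rw [hEinv]; exact cs_posDef α β hβ hβα
  set A : Matrix (Fin P) (Fin P) ℝ := Matrix.diagonal v + Δ⁻¹ with hAdef
  have hApd : A.PosDef :=
    Matrix.PosDef.posSemidef_add (Matrix.PosSemidef.diagonal (fun i => hv0 i)) hEpd
  have hdet : IsUnit A.det := (Matrix.isUnit_iff_isUnit_det _).mp hApd.isUnit
  set X : Matrix (Fin P) (Fin P) ℝ := A⁻¹ with hXdef
  have hXA : X * A = 1 := Matrix.nonsing_inv_mul _ hdet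
  have hAX : A * X = 1 := Matrix.mul_nonsing_inv _ hdet
  set B : Matrix (Fin P) (Fin P) ℝ := X - Z with hBdef
  have e1 : X * A * X = X := by rw [hXA, one_mul]
  have e2 : X * A * Z = Z := by rw [hXA, one_mul]
  have e3 : Z * A * X = Z := by rw [Matrix.mul_assoc, hAX, mul_one]
  have key : B * A * B = X - Z - Z + Z * A * Z := by
    have : B * A * B = X*A*X - X*A*Z - Z*A*X + Z*A*Z := by
      rw [hBdef]; noncomm_ring
    rw [this, e1, e2, e3]
  have hXeq : X = B * A * B + Z + Z - Z * A * Z := by rw [key]; abel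
  -- the Z*Z trick
  have hZZ : Z * Z = (α'*α'*(P:ℝ) + α'*β' + β'*α') • JJ P + (β'*β') • 1 := by
    rw [hZdef, cs_mul]
  have trZZdiag : ∀ d : Fin P → ℝ,
      (Z * Z * Matrix.diagonal d).trace
        = ((α'*α'*(P:ℝ) + α'*β' + β'*α') + β'*β') * ∑ i, d i := by
    intro d
    rw [hZZ]
    simp [Matrix.trace, Matrix.diag, Matrix.mul_diagonal, JJ, Matrix.one_apply,
      Finset.mul_sum, add_mul]
  have trZdZ : ∀ d : Fin P → ℝ,
      (Z * Matrix.diagonal d * Z).trace = (Z * Z * Matrix.diagonal d).trace := by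
    intro d
    rw [Matrix.trace_mul_cycle]
  -- trace (Z A Z) = trace Z
  have hsumw : ∑ _i : Fin P, (P:ℝ)⁻¹ = 1 := by
    simp [Finset.sum_const]
    field_simp
  have hZAZ : (Z * A * Z).trace = Z.trace := by
    have expand : Z * A * Z = Z * Matrix.diagonal v * Z + Z * Δ⁻¹ * Z := by
      rw [hAdef]; noncomm_ring
    have expand' : Z * (Matrix.diagonal (fun _ : Fin P => (P:ℝ)⁻¹) + Δ⁻¹) * Z
        = Z * Matrix.diagonal (fun _ : Fin P => (P:ℝ)⁻¹) * Z + Z * Δ⁻¹ * Z := by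
      noncomm_ring
    have eqtr : (Z * Matrix.diagonal v * Z).trace
        = (Z * Matrix.diagonal (fun _ : Fin P => (P:ℝ)⁻¹) * Z).trace := by
      rw [trZdZ, trZdZ, trZZdiag, trZZdiag, hv1, hsumw]
    have : (Z * A * Z).trace
        = (Z * (Matrix.diagonal (fun _ : Fin P => (P:ℝ)⁻¹) + Δ⁻¹) * Z).trace := by
      rw [expand, expand', Matrix.trace_add, Matrix.trace_add, eqtr]
    rw [this, hAst, hZ2, one_mul]
  -- symmetry of B
  have hXh : Xᴴ = X := hApd.inv.isHermitian
  have hZh : Zᴴ = Z := by rw [hZdef]; exact cs_transpose α' β'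
  have hBh : Bᴴ = B := by rw [hBdef, conjTranspose_sub, hXh, hZh]
  have hBAB : 0 ≤ (B * A * B).trace := by
    have := hApd.posSemidef.conjTranspose_mul_mul_same B
    rw [hBh] at this
    exact psd_trace_nonneg this
  -- conclude
  have : X.trace = (B * A * B).trace + Z.trace := by
    rw [hXeq, Matrix.trace_sub, Matrix.trace_add, Matrix.trace_add, hZAZ]
    ring
  rw [hZinv, ← hXdef, ← hAdef] at *
  rw [this]
  linarith
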